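/- arXiv:2505.08386 — 5 statements merged into one kernel-verified Lean document; each statement's English description precedes it below -/
import Mathlib

section
/- Let E be a real inner product space, b₁,…,b_r ∈ E linearly independent with Gram–Schmidt vectors b_i^* and coefficients μ_{i,l}. Fix 1 ≤ j ≤ k ≤ r, let π_j be the orthogonal projection onto the orthogonal complement of span(b₁,…,b_{j−1}), and set b̂_i := π_j(b_i) for j ≤ i ≤ k. Then for all indices j ≤ l < i ≤ k, the Gram–Schmidt coefficient of the projected family equals that of the original family: ⟨b̂_i, b̂_l^*⟩/⟨b̂_l^*, b̂_l^*⟩ = μ_{i,l}, where b̂_l^* denotes the l-th Gram–Schmidt vector of (b̂_j,…,b̂_k). -/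
open scoped InnerProductSpace

/-- The Gram–Schmidt orthogonalization `b*` of a finite family `b : Fin r → E`
(Mathlib's `gramSchmidt`, specialized to the index type `Fin r` over `ℝ`):
`b*_i = b_i - ∑_{l<i} μ_{i,l} b*_l`. -/
noncomputable def gso {E : Type*} [NormedAddCommGroup E] [InnerProductSpace ℝ E]
    {r : ℕ} (b : Fin r → E) : Fin r → E :=
  @InnerProductSpace.gramSchmidt ℝ E _ _ _ (Fin r) _ _ (inferInstance : WellFoundedLT (Fin r)) b

open Submodule
lemma gso_eq_gramSchmidt {E : Type*} [NormedAddCommGroup E] [InnerProductSpace ℝ E]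
    {r : ℕ} (b : Fin r → E) :
    gso b = @InnerProductSpace.gramSchmidt ℝ E _ _ _ (Fin r) _ _ (inferInstance : WellFoundedLT (Fin r)) b := rfl

lemma mem_orthogonal_span' {E : Type*} [NormedAddCommGroup E] [InnerProductSpace ℝ E]
    {s : Set E} {v : E} (h : ∀ x ∈ s, ⟪x, v⟫_ℝ = 0) :
    v ∈ (Submodule.span ℝ s)ᗮ := by
  rw [Submodule.mem_orthogonal]
  intro u hu
  induction hu using Submodule.span_induction with
  | mem x hx => exact h x hx
  | zero => simp
  | add x y _ _ hx hy => simp [inner_add_left, hx, hy]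
  | smul a x _ hx => simp [inner_smul_left, hx]

lemma orth_decomp_unique {E : Type*} [NormedAddCommGroup E] [InnerProductSpace ℝ E]
    {S : Submodule ℝ E} {x v w : E}
    (hv : x - v ∈ S) (hv' : v ∈ Sᗮ) (hw : x - w ∈ S) (hw' : w ∈ Sᗮ) : v = w := by
  have h1 : v - w ∈ S := by
    have := S.sub_mem hw hv
    simpa using this
  have h2 : v - w ∈ Sᗮ := Sᗮ.sub_mem hv' hw'
  have hd := Submodule.orthogonal_disjoint S
  rw [disjoint_iff] at hd
  have : v - w ∈ (⊥ : Submodule ℝ E) := hd ▸ Submodule.mem_inf.mpr ⟨h1, h2⟩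
  have := (Submodule.mem_bot ℝ).mp this
  exact sub_eq_zero.mp this

lemma gso_sub_mem {E : Type*} [NormedAddCommGroup E] [InnerProductSpace ℝ E]
    {r : ℕ} (b : Fin r → E) (i : Fin r) :
    b i - gso b i ∈ span ℝ (b '' Set.Iio i) := by
  haveI : WellFoundedLT (Fin r) := inferInstance
  rw [gso_eq_gramSchmidt, ← InnerProductSpace.span_gramSchmidt_Iio ℝ b i]
  have hrw : b i - InnerProductSpace.gramSchmidt ℝ b i
      = ∑ k ∈ Finset.Iio i, (ℝ ∙ InnerProductSpace.gramSchmidt ℝ b k).starProjection (b i) := by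
    rw [InnerProductSpace.gramSchmidt_def ℝ b i]; abel
  rw [hrw]
  refine Submodule.sum_mem _ fun k hk => ?_
  have hmem : (ℝ ∙ InnerProductSpace.gramSchmidt ℝ b k).starProjection (b i)
      ∈ ℝ ∙ InnerProductSpace.gramSchmidt ℝ b k := starProjection_apply_mem _ _
  refine Submodule.span_mono ?_ hmem
  rintro x rfl
  exact Set.mem_image_of_mem _ (Finset.mem_Iio.mp hk)

lemma gso_mem_orthogonal {E : Type*} [NormedAddCommGroup E] [InnerProductSpace ℝ E]
    {r : ℕ} (b : Fin r → E) (i : Fin r) :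
    gso b i ∈ (span ℝ (b '' Set.Iio i))ᗮ := by
  haveI : WellFoundedLT (Fin r) := inferInstance
  rw [gso_eq_gramSchmidt, ← InnerProductSpace.span_gramSchmidt_Iio ℝ b i]
  apply mem_orthogonal_span'
  rintro x ⟨l, hl, rfl⟩
  exact InnerProductSpace.gramSchmidt_orthogonal ℝ b (ne_of_lt hl)


/-- The Gram–Schmidt coefficient `μ_{i,l} = ⟪b_i, b*_l⟫ / ⟪b*_l, b*_l⟫`. -/
noncomputable def gsCoeff {E : Type*} [NormedAddCommGroup E] [InnerProductSpace ℝ E]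
    {r : ℕ} (b : Fin r → E) (i l : Fin r) : ℝ :=
  ⟪b i, gso b l⟫_ℝ / ⟪gso b l, gso b l⟫_ℝ

/-- `projPerp b j` is the orthogonal projection `π_j` of `E` onto the orthogonal
complement of `span (b_l : l < j)` (so `projPerp b 0` is the identity). -/
noncomputable def projPerp {E : Type*} [NormedAddCommGroup E] [InnerProductSpace ℝ E]
    {r : ℕ} (b : Fin r → E) (j : ℕ) (x : E) : E :=
  haveI : FiniteDimensional ℝ (Submodule.span ℝ (b '' {l : Fin r | (l : ℕ) < j})) :=
    FiniteDimensional.span_of_finite ℝ (Set.toFinite _)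
  (Submodule.orthogonalProjectionOnto (Submodule.span ℝ (b '' {l : Fin r | (l : ℕ) < j}))ᗮ x : E)

/-- For linearly independent `b_0, …, b_{r-1}` and `j ≤ k < r`, let
`b̂_t := π_j(b_{j+t})` for `0 ≤ t ≤ k - j`. Then for all `s < t` in range, the
Gram–Schmidt coefficient of the projected family equals that of the original family:
`⟪b̂_t, b̂*_s⟫ / ⟪b̂*_s, b̂*_s⟫ = μ_{j+t, j+s}`. -/
theorem gramSchmidtCoeff_of_projected_family_eq
    {E : Type*} [NormedAddCommGroup E] [InnerProductSpace ℝ E]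
    {r : ℕ} (b : Fin r → E) (hb : LinearIndependent ℝ b)
    (j k : ℕ) (hjk : j ≤ k) (hk : k < r)
    (bhat : Fin (k - j + 1) → E)
    (hbhat : ∀ t : Fin (k - j + 1),
      bhat t = projPerp b j (b ⟨j + t, by have := t.isLt; omega⟩)) :
    ∀ t s : Fin (k - j + 1), s < t →
      gsCoeff bhat t s =
        gsCoeff b ⟨j + t, by have := t.isLt; omega⟩ ⟨j + s, by have := s.isLt; omega⟩ := by
  intro t s hst
  haveI : FiniteDimensional ℝ (Submodule.span ℝ (b '' {l : Fin r | (l : ℕ) < j})) :=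
    FiniteDimensional.span_of_finite ℝ (Set.toFinite _)
  set Sj : Submodule ℝ E := Submodule.span ℝ (b '' {l : Fin r | (l : ℕ) < j}) with hSjdef
  have hidx : ∀ u : Fin (k - j + 1), j + (u : ℕ) < r := fun u => by have := u.isLt; omega
  set idx : Fin (k - j + 1) → Fin r := fun u => ⟨j + u, hidx u⟩ with hidxdef
  have hb1 : ∀ u : Fin (k - j + 1), bhat u ∈ Sjᗮ := by
    intro u
    rw [hbhat u]
    exact SetLike.coe_mem _
  have hb2 : ∀ u : Fin (k - j + 1), b (idx u) - bhat u ∈ Sj := by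
    intro u
    have h := sub_starProjection_mem_orthogonal (K := Sjᗮ) (b (idx u))
    rw [Submodule.orthogonal_orthogonal] at h
    rw [hbhat u]
    exact h
  have hSjle : ∀ u : Fin (k - j + 1), Sj ≤ Submodule.span ℝ (b '' Set.Iio (idx u)) := by
    intro u
    apply Submodule.span_mono
    apply Set.image_mono
    intro l hl
    simp only [Set.mem_setOf_eq] at hl
    have : (l : ℕ) < j + (u : ℕ) := by omega
    exact Set.mem_Iio.mpr this
  have key : ∀ u : Fin (k - j + 1), gso bhat u = gso b (idx u) := by
    intro u
    set S : Submodule ℝ E := Submodule.span ℝ (bhat '' Set.Iio u) with hSdef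
    have hSle : S ≤ Sjᗮ := by
      rw [hSdef, Submodule.span_le]
      rintro x ⟨s', _, rfl⟩
      exact hb1 s'
    have hbhat_mem : ∀ s' : Fin (k - j + 1), s' < u →
        bhat s' ∈ Submodule.span ℝ (b '' Set.Iio (idx u)) := by
      intro s' hs'
      have hs'' : (s' : ℕ) < (u : ℕ) := hs'
      have h1 : b (idx s') ∈ Submodule.span ℝ (b '' Set.Iio (idx u)) := by
        refine Submodule.subset_span ⟨idx s', Set.mem_Iio.mpr ?_, rfl⟩
        exact Fin.mk_lt_mk.mpr (by omega)
      have h2 := hSjle u (hb2 s')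
      have he : bhat s' = b (idx s') - (b (idx s') - bhat s') := by abel
      rw [he]
      exact Submodule.sub_mem _ h1 h2
    have B2 : gso b (idx u) ∈ Sᗮ := by
      rw [hSdef]
      apply mem_orthogonal_span'
      rintro x ⟨s', hs', rfl⟩
      exact (Submodule.mem_orthogonal _ _).mp (gso_mem_orthogonal b (idx u)) _
        (hbhat_mem s' hs')
    have B1 : bhat u - gso b (idx u) ∈ S := by
      have hd1 : bhat u - gso b (idx u) ∈ Sj ⊔ S := by
        have e : bhat u - gso b (idx u)
            = (b (idx u) - gso b (idx u)) - (b (idx u) - bhat u) := by abel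
        rw [e]
        refine Submodule.sub_mem _ ?_ (Submodule.mem_sup_left (hb2 u))
        have hspan : Submodule.span ℝ (b '' Set.Iio (idx u)) ≤ Sj ⊔ S := by
          rw [Submodule.span_le]
          rintro x ⟨l, hl, rfl⟩
          have hl' : (l : ℕ) < j + (u : ℕ) := Set.mem_Iio.mp hl
          by_cases hlj : (l : ℕ) < j
          · exact Submodule.mem_sup_left (Submodule.subset_span ⟨l, hlj, rfl⟩)
          · push_neg at hlj
            have hlt : (l : ℕ) - j < k - j + 1 := by have := u.isLt; omega
            set s' : Fin (k - j + 1) := ⟨(l : ℕ) - j, hlt⟩ with hs'def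
            have hidxs' : idx s' = l := by
              apply Fin.ext
              show j + ((l : ℕ) - j) = (l : ℕ)
              omega
            have hb_eq : b l = bhat s' + (b (idx s') - bhat s') := by
              rw [hidxs']; abel
            rw [hb_eq]
            refine Submodule.add_mem _ ?_ (Submodule.mem_sup_left (hb2 s'))
            refine Submodule.mem_sup_right (Submodule.subset_span ⟨s', Set.mem_Iio.mpr ?_, rfl⟩)
            exact Fin.mk_lt_mk.mpr (by omega)
        exact hspan (gso_sub_mem b (idx u))
      have hd2 : bhat u - gso b (idx u) ∈ Sjᗮ := by
        refine Submodule.sub_mem _ (hb1 u) ?_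
        exact (Submodule.orthogonal_le (hSjle u)) (gso_mem_orthogonal b (idx u))
      obtain ⟨p, hp, q, hq, hpq⟩ := Submodule.mem_sup.mp hd1
      have hq' : q ∈ Sjᗮ := hSle hq
      have hp' : p ∈ Sjᗮ := by
        have hpe : p = (bhat u - gso b (idx u)) - q := by rw [← hpq]; abel
        rw [hpe]
        exact Submodule.sub_mem _ hd2 hq'
      have hp0 : p = 0 := by
        have hd := Submodule.orthogonal_disjoint Sj
        rw [disjoint_iff] at hd
        have hmem : p ∈ (⊥ : Submodule ℝ E) := hd ▸ Submodule.mem_inf.mpr ⟨hp, hp'⟩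
        exact (Submodule.mem_bot ℝ).mp hmem
      rw [← hpq, hp0, zero_add]
      exact hq
    exact orth_decomp_unique (gso_sub_mem bhat u) (gso_mem_orthogonal bhat u) B1 B2
  have hnum : ⟪bhat t, gso bhat s⟫_ℝ = ⟪b (idx t), gso b (idx s)⟫_ℝ := by
    rw [key s]
    have hmem : gso b (idx s) ∈ Sjᗮ :=
      (Submodule.orthogonal_le (hSjle s)) (gso_mem_orthogonal b (idx s))
    have hz : ⟪b (idx t) - bhat t, gso b (idx s)⟫_ℝ = 0 :=
      (Submodule.mem_orthogonal _ _).mp hmem _ (hb2 t)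
    rw [inner_sub_left] at hz
    have : ⟪b (idx t), gso b (idx s)⟫_ℝ - ⟪bhat t, gso b (idx s)⟫_ℝ = 0 := hz
    linarith
  have hden : ⟪gso bhat s, gso bhat s⟫_ℝ = ⟪gso b (idx s), gso b (idx s)⟫_ℝ := by
    rw [key s]
  show gsCoeff bhat t s = gsCoeff b (idx t) (idx s)
  unfold gsCoeff
  rw [hnum, hden]
end

section
/- Let E be a real inner product space, b₁,…,b_r ∈ E linearly independent with Gram–Schmidt vectors b_i^*, and let 1/4 < δ < 1. If the basis is δ-LLL reduced, then for all indices 1 ≤ j ≤ i ≤ r, ‖b_j^*‖² ≤ (δ − 1/4)^{−(i−j)} ‖b_i^*‖²; equivalently, ‖b_j^*‖/‖b_i^*‖ ≤ (δ − 1/4)^{−(i−j)/2}. -/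
open scoped InnerProductSpace

/-- A basis `b` is `δ`-LLL reduced if it is size-reduced (`|μ_{i,l}| ≤ 1/2` for `l < i`)
and satisfies the Lovász condition
`δ‖b*_{t}‖² ≤ ‖b*_{t+1} + μ_{t+1,t} b*_{t}‖²` for all `t+1 < r`. -/
def IsLLLReduced {E : Type*} [NormedAddCommGroup E] [InnerProductSpace ℝ E]
    (δ : ℝ) {r : ℕ} (b : Fin r → E) : Prop :=
  (∀ i l : Fin r, l < i → |gsCoeff b i l| ≤ 1 / 2) ∧
  ∀ (t : ℕ) (ht : t + 1 < r),
    δ * ‖gso b ⟨t, Nat.lt_of_succ_lt ht⟩‖ ^ 2 ≤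
      ‖gso b ⟨t + 1, ht⟩ +
        gsCoeff b ⟨t + 1, ht⟩ ⟨t, Nat.lt_of_succ_lt ht⟩ •
          gso b ⟨t, Nat.lt_of_succ_lt ht⟩‖ ^ 2

lemma gso_step {E : Type*} [NormedAddCommGroup E] [InnerProductSpace ℝ E]
    {r : ℕ} (b : Fin r → E) {δ : ℝ} (hLLL : IsLLLReduced δ b)
    (t : ℕ) (ht : t + 1 < r) :
    (δ - 1 / 4) * ‖gso b ⟨t, Nat.lt_of_succ_lt ht⟩‖ ^ 2 ≤ ‖gso b ⟨t + 1, ht⟩‖ ^ 2 := by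
  set x := gso b ⟨t + 1, ht⟩ with hx
  set y := gso b ⟨t, Nat.lt_of_succ_lt ht⟩ with hy
  set μ := gsCoeff b ⟨t + 1, ht⟩ ⟨t, Nat.lt_of_succ_lt ht⟩ with hμdef
  have hne : (⟨t + 1, ht⟩ : Fin r) ≠ ⟨t, Nat.lt_of_succ_lt ht⟩ := by
    simp [Fin.ext_iff]
  have hxy : ⟪x, y⟫_ℝ = 0 :=
    @InnerProductSpace.gramSchmidt_orthogonal ℝ E _ _ _ (Fin r) _ _ (inferInstance : WellFoundedLT (Fin r)) b _ _ hne
  have horth : ⟪x, μ • y⟫_ℝ = 0 := by rw [real_inner_smul_right, hxy, mul_zero]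
  have hμ : |μ| ≤ 1 / 2 := hLLL.1 _ _ (by simp)
  have hμ' := abs_le.mp hμ
  have hμ2 : μ ^ 2 ≤ 1 / 4 := by nlinarith [hμ'.1, hμ'.2]
  have hL := hLLL.2 t ht
  have hexp : ‖x + μ • y‖ ^ 2 = ‖x‖ ^ 2 + μ ^ 2 * ‖y‖ ^ 2 := by
    rw [norm_add_sq_real, horth, norm_smul]
    simp [mul_pow, sq_abs]
  rw [hexp] at hL
  nlinarith [sq_nonneg ‖y‖]

/-- If `b` is `δ`-LLL reduced with `1/4 < δ < 1`, then for all `j ≤ i`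
one has `‖b*_j‖² ≤ (δ - 1/4)^{-(i-j)} ‖b*_i‖²`; equivalently,
`‖b*_j‖ / ‖b*_i‖ ≤ (δ - 1/4)^{-(i-j)/2}`. -/
theorem sq_norm_gramSchmidt_ratio_le_of_isLLLReduced
    {E : Type*} [NormedAddCommGroup E] [InnerProductSpace ℝ E]
    {r : ℕ} (b : Fin r → E) (hb : LinearIndependent ℝ b)
    (δ : ℝ) (hδ : 1 / 4 < δ) (hδ' : δ < 1) (hLLL : IsLLLReduced δ b)
    (j i : Fin r) (hji : j ≤ i) :
    ‖gso b j‖ ^ 2 ≤ ((δ - 1 / 4) ^ ((i : ℕ) - (j : ℕ)))⁻¹ * ‖gso b i‖ ^ 2 ∧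
    ‖gso b j‖ / ‖gso b i‖ ≤
      (δ - 1 / 4) ^ (-((((i : ℕ) : ℝ) - ((j : ℕ) : ℝ)) / 2)) := by
  have hcpos : (0:ℝ) < δ - 1 / 4 := by linarith
  have key : ∀ n : ℕ, ∀ (jk ik : Fin r), (jk : ℕ) + n = (ik : ℕ) →
      (δ - 1 / 4) ^ n * ‖gso b jk‖ ^ 2 ≤ ‖gso b ik‖ ^ 2 := by
    intro n
    induction n with
    | zero => intro jk ik h; have : jk = ik := Fin.ext (by omega); simp [this]
    | succ m ih =>
      intro jk ik h
      have hm : (jk : ℕ) + m + 1 < r := by omega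
      have h1 := ih jk ⟨(jk : ℕ) + m, Nat.lt_of_succ_lt hm⟩ rfl
      have h2 := gso_step b hLLL ((jk : ℕ) + m) hm
      have hik : ik = ⟨(jk : ℕ) + m + 1, hm⟩ := Fin.ext (by simp; omega)
      rw [hik]
      calc (δ - 1/4) ^ (m + 1) * ‖gso b jk‖ ^ 2
          = (δ - 1/4) * ((δ - 1/4) ^ m * ‖gso b jk‖ ^ 2) := by ring
        _ ≤ (δ - 1/4) * ‖gso b ⟨(jk : ℕ) + m, Nat.lt_of_succ_lt hm⟩‖ ^ 2 :=
            mul_le_mul_of_nonneg_left h1 hcpos.le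
        _ ≤ ‖gso b ⟨(jk : ℕ) + m + 1, hm⟩‖ ^ 2 := h2
  set m : ℕ := (i : ℕ) - (j : ℕ) with hmdef
  have hkey := key m j i (by omega)
  have hcpow : (0:ℝ) < (δ - 1/4) ^ m := pow_pos hcpos _
  have part1 : ‖gso b j‖ ^ 2 ≤ ((δ - 1/4) ^ m)⁻¹ * ‖gso b i‖ ^ 2 := by
    rw [← div_eq_inv_mul, le_div_iff₀ hcpow, mul_comm]
    exact hkey
  refine ⟨part1, ?_⟩
  have hine : gso b i ≠ 0 := @InnerProductSpace.gramSchmidt_ne_zero ℝ E _ _ _ (Fin r) _ _ (inferInstance : WellFoundedLT (Fin r)) b i hb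
  have hipos : 0 < ‖gso b i‖ := norm_pos_iff.mpr hine
  have hji' : (j : ℕ) ≤ (i : ℕ) := hji
  have hcast : (((i : ℕ) : ℝ) - ((j : ℕ) : ℝ)) = (m : ℝ) := by
    rw [hmdef, Nat.cast_sub hji']
  rw [hcast]
  have hrpow : ((δ - 1/4) ^ (-((m:ℝ)/2))) ^ 2 = ((δ - 1/4) ^ m)⁻¹ := by
    rw [← Real.rpow_natCast ((δ - 1/4) ^ (-((m:ℝ)/2))) 2, ← Real.rpow_mul hcpos.le]
    norm_num
  have hsq : (‖gso b j‖ / ‖gso b i‖) ^ 2 ≤ ((δ - 1/4) ^ (-((m:ℝ)/2))) ^ 2 := by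
    rw [hrpow, div_pow, div_le_iff₀ (by positivity)]
    exact part1
  have h1 : 0 ≤ ‖gso b j‖ / ‖gso b i‖ := by positivity
  have h2 : 0 ≤ (δ - 1/4) ^ (-((m:ℝ)/2)) := Real.rpow_nonneg hcpos.le _
  nlinarith [hsq, h1, h2]
end

section
/- Let E be a real inner product space, b₁,…,b_r ∈ E linearly independent with Gram–Schmidt vectors b_i^*, and let 1/4 < δ < 1. Suppose the basis is δ-LLL reduced. Fix 1 ≤ j ≤ k ≤ r, set β = k − j + 1 and R_i = ‖b_j^*‖/‖b_i^*‖ for j ≤ i ≤ k. Then the product satisfies Π_{i=j}^{k} R_i ≤ (δ − 1/4)^{−β(β−1)/4}. -/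
open scoped InnerProductSpace

section AuxLLL
variable {E : Type*} [NormedAddCommGroup E] [InnerProductSpace ℝ E] {r : ℕ}

lemma gso_orthogonal (b : Fin r → E) {i l : Fin r} (h : i ≠ l) : ⟪gso b i, gso b l⟫_ℝ = 0 :=
  @InnerProductSpace.gramSchmidt_orthogonal ℝ E _ _ _ (Fin r) _ _ (inferInstance : WellFoundedLT (Fin r)) b _ _ h

lemma gso_ne_zero (b : Fin r → E) (hb : LinearIndependent ℝ b) (i : Fin r) : gso b i ≠ 0 :=
  @InnerProductSpace.gramSchmidt_ne_zero ℝ E _ _ _ (Fin r) _ _ (inferInstance : WellFoundedLT (Fin r)) b i hb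

lemma lll_step (b : Fin r → E) {δ : ℝ} (hLLL : IsLLLReduced δ b)
    (t : ℕ) (ht : t + 1 < r) :
    (δ - 1/4) * ‖gso b ⟨t, Nat.lt_of_succ_lt ht⟩‖ ^ 2 ≤ ‖gso b ⟨t+1, ht⟩‖ ^ 2 := by
  have hlov := hLLL.2 t ht
  set x := gso b ⟨t+1, ht⟩
  set y := gso b ⟨t, Nat.lt_of_succ_lt ht⟩
  set μ := gsCoeff b ⟨t+1,ht⟩ ⟨t, Nat.lt_of_succ_lt ht⟩ with hμdef
  have hμ : |μ| ≤ 1/2 := hLLL.1 ⟨t+1, ht⟩ ⟨t, Nat.lt_of_succ_lt ht⟩ (by simp)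
  have horth : ⟪x, y⟫_ℝ = 0 := gso_orthogonal b (by simp [Fin.ext_iff])
  have hexp : ‖x + μ • y‖ ^ 2 = ‖x‖ ^ 2 + μ ^ 2 * ‖y‖ ^ 2 := by
    rw [norm_add_sq_real, inner_smul_right, horth, norm_smul]
    simp only [mul_zero, add_zero]
    rw [mul_pow, Real.norm_eq_abs, sq_abs]
  have hμ2 : μ ^ 2 ≤ 1/4 := by
    have := abs_nonneg μ
    nlinarith [sq_abs μ]
  nlinarith [hlov, sq_nonneg ‖y‖]

lemma lll_pow (b : Fin r → E) {δ : ℝ} (hδ : 1/4 < δ) (hLLL : IsLLLReduced δ b)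
    (j : Fin r) (n : ℕ) (hn : (j : ℕ) + n < r) :
    (δ - 1/4) ^ n * ‖gso b j‖ ^ 2 ≤ ‖gso b ⟨(j : ℕ) + n, hn⟩‖ ^ 2 := by
  induction n with
  | zero => simp
  | succ n ih =>
    have hn' : (j : ℕ) + n < r := by omega
    have h1 := ih hn'
    have h2 := lll_step b hLLL ((j : ℕ) + n) (by omega : (j : ℕ) + n + 1 < r)
    have hε : (0:ℝ) < δ - 1/4 := by linarith
    calc (δ - 1/4) ^ (n+1) * ‖gso b j‖ ^ 2
        = (δ - 1/4) * ((δ - 1/4) ^ n * ‖gso b j‖ ^ 2) := by ring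
      _ ≤ (δ - 1/4) * ‖gso b ⟨(j : ℕ) + n, hn'⟩‖ ^ 2 :=
          mul_le_mul_of_nonneg_left h1 hε.le
      _ ≤ ‖gso b ⟨(j : ℕ) + n + 1, _⟩‖ ^ 2 := h2
      _ = ‖gso b ⟨(j : ℕ) + (n + 1), hn⟩‖ ^ 2 := rfl

end AuxLLL

/-- If `b` is `δ`-LLL reduced with `1/4 < δ < 1`, `j ≤ k`,
`β = k - j + 1`, and `R_i = ‖b*_j‖ / ‖b*_i‖`, then
`∏_{i=j}^{k} R_i ≤ (δ - 1/4)^{-β(β-1)/4}`. -/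
theorem prod_gramSchmidt_ratio_le_of_isLLLReduced
    {E : Type*} [NormedAddCommGroup E] [InnerProductSpace ℝ E]
    {r : ℕ} (b : Fin r → E) (hb : LinearIndependent ℝ b)
    (δ : ℝ) (hδ : 1 / 4 < δ) (hδ' : δ < 1) (hLLL : IsLLLReduced δ b)
    (j k : Fin r) (hjk : j ≤ k) (β : ℕ) (hβ : β = (k : ℕ) - (j : ℕ) + 1) :
    ∏ i ∈ Finset.Icc j k, (‖gso b j‖ / ‖gso b i‖) ≤
      (δ - 1 / 4) ^ (-((β : ℝ) * ((β : ℝ) - 1) / 4)) := by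
  set ε := δ - 1/4 with hεdef
  have hε : (0:ℝ) < ε := by simp [hεdef]; linarith
  set c : ℝ := ε ^ ((-1 : ℝ)/2) with hcdef
  have hc : (0:ℝ) < c := Real.rpow_pos_of_pos hε _
  -- each factor bound
  have hfac : ∀ i ∈ Finset.Icc j k, ‖gso b j‖ / ‖gso b i‖ ≤ c ^ ((i : ℕ) - (j : ℕ)) := by
    intro i hi
    rw [Finset.mem_Icc] at hi
    set n := (i : ℕ) - (j : ℕ) with hndef
    have hji : (j : ℕ) ≤ (i : ℕ) := hi.1
    have hir : (i : ℕ) < r := i.isLt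
    have hieq : i = ⟨(j : ℕ) + n, by omega⟩ := by ext; simp only [hndef]; omega
    have hpow := lll_pow b hδ hLLL j n (by omega)
    rw [← hieq] at hpow
    have hnj : (0:ℝ) < ‖gso b j‖ := norm_pos_iff.mpr (gso_ne_zero b hb j)
    have hni : (0:ℝ) < ‖gso b i‖ := norm_pos_iff.mpr (gso_ne_zero b hb i)
    -- (‖j‖/‖i‖)^2 ≤ ε^{-n} = (c^n)^2
    have hsq : (‖gso b j‖ / ‖gso b i‖) ^ 2 ≤ (c ^ n) ^ 2 := by
      have hcn : (c ^ n) ^ 2 = (ε ^ n)⁻¹ := by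
        rw [hcdef, ← Real.rpow_natCast (ε ^ ((-1:ℝ)/2)) n, ← Real.rpow_natCast ((ε ^ ((-1:ℝ)/2)) ^ (n:ℝ)) 2,
          ← Real.rpow_mul hε.le, ← Real.rpow_mul hε.le, ← Real.rpow_natCast ε n,
          ← Real.rpow_neg_one (ε ^ (n:ℝ)), ← Real.rpow_mul hε.le]
        ring_nf
      rw [hcn, div_pow, div_le_iff₀ (by positivity), inv_mul_eq_div, le_div_iff₀ (by positivity)]
      calc ‖gso b j‖ ^ 2 * ε ^ n = ε ^ n * ‖gso b j‖ ^ 2 := by ring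
        _ ≤ ‖gso b i‖ ^ 2 := hpow
    have h1 : (0:ℝ) ≤ ‖gso b j‖ / ‖gso b i‖ := by positivity
    have h2 : (0:ℝ) ≤ c ^ n := by positivity
    nlinarith
  have hprod : ∏ i ∈ Finset.Icc j k, (‖gso b j‖ / ‖gso b i‖) ≤
      ∏ i ∈ Finset.Icc j k, c ^ ((i : ℕ) - (j : ℕ)) :=
    Finset.prod_le_prod (fun i _ => by positivity) hfac
  -- compute the sum of exponents
  have hsum : ∑ i ∈ Finset.Icc j k, ((i : ℕ) - (j : ℕ)) = ∑ m ∈ Finset.range β, m := by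
    have h1 : ∑ i ∈ Finset.Icc j k, ((i : ℕ) - (j : ℕ)) =
        ∑ i ∈ Finset.Icc (j : ℕ) (k : ℕ), (i - (j : ℕ)) := by
      rw [← Fin.map_valEmbedding_Icc, Finset.sum_map]
      rfl
    rw [h1, ← Finset.Ico_add_one_right_eq_Icc, Finset.sum_Ico_eq_sum_range]
    have h2 : (k : ℕ) + 1 - (j : ℕ) = β := by omega
    rw [h2]
    exact Finset.sum_congr rfl (fun m _ => by omega)
  have hgauss : (∑ m ∈ Finset.range β, m) * 2 = β * (β - 1) := Finset.sum_range_id_mul_two β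
  set S := ∑ m ∈ Finset.range β, m with hSdef
  have hprodpow : ∏ i ∈ Finset.Icc j k, c ^ ((i : ℕ) - (j : ℕ)) = c ^ S := by
    rw [Finset.prod_pow_eq_pow_sum, hsum]
  -- c ^ S = ε ^ (-(β(β-1)/4))
  have hfinal : c ^ S = ε ^ (-((β : ℝ) * ((β : ℝ) - 1) / 4)) := by
    rw [hcdef, ← Real.rpow_natCast (ε ^ ((-1:ℝ)/2)) S, ← Real.rpow_mul hε.le]
    congr 1
    have hβ1 : 1 ≤ β := by omega
    have h2S : ((S : ℝ)) * 2 = (β : ℝ) * ((β : ℝ) - 1) := by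
      have : ((S * 2 : ℕ) : ℝ) = ((β * (β - 1) : ℕ) : ℝ) := by rw [hgauss]
      push_cast [Nat.cast_sub hβ1] at this
      push_cast
      linarith
    linarith
  calc ∏ i ∈ Finset.Icc j k, (‖gso b j‖ / ‖gso b i‖)
      ≤ ∏ i ∈ Finset.Icc j k, c ^ ((i : ℕ) - (j : ℕ)) := hprod
    _ = c ^ S := hprodpow
    _ = ε ^ (-((β : ℝ) * ((β : ℝ) - 1) / 4)) := hfinal
end

section
/- Let E be a real inner product space and b₁,…,b_r ∈ E linearly independent with Gram–Schmidt vectors b_i^*. Suppose the basis is (3/4)-LLL reduced, so that in particular ‖b_i^*‖² ≥ (1/2)‖b_{i−1}^*‖² for all 1 < i ≤ r. Fix 1 ≤ j ≤ k ≤ r, set β = k − j + 1 and R_i = ‖b_j^*‖/‖b_i^*‖ for j ≤ i ≤ k. Then the total qubit count satisfies Σ_{i=j}^{k} (⌊log₂ R_i⌋ + 1) ≤ ⌊(β² + 3β)/4⌋. -/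
open scoped InnerProductSpace

-- step lemma
lemma step_lemma {E : Type*} [NormedAddCommGroup E] [InnerProductSpace ℝ E]
    {r : ℕ} (b : Fin r → E) (hLLL : IsLLLReduced (3 / 4) b)
    (t : ℕ) (ht : t + 1 < r) :
    ‖gso b ⟨t, Nat.lt_of_succ_lt ht⟩‖ ^ 2 ≤ 2 * ‖gso b ⟨t + 1, ht⟩‖ ^ 2 := by
  obtain ⟨hsize, hlov⟩ := hLLL
  have h := hlov t ht
  set x := gso b ⟨t + 1, ht⟩
  set y := gso b ⟨t, Nat.lt_of_succ_lt ht⟩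
  set μ := gsCoeff b ⟨t + 1, ht⟩ ⟨t, Nat.lt_of_succ_lt ht⟩ with hμ
  have horth : ⟪x, y⟫_ℝ = 0 := by
    exact @InnerProductSpace.gramSchmidt_orthogonal ℝ E _ _ _ (Fin r) _ _
      (inferInstance : WellFoundedLT (Fin r)) b _ _ (by simp [Fin.ne_iff_vne])
  have hexp : ‖x + μ • y‖ ^ 2 = ‖x‖ ^ 2 + μ ^ 2 * ‖y‖ ^ 2 := by
    rw [norm_add_sq_real, real_inner_smul_right, horth, norm_smul]
    simp [mul_pow, sq_abs]
  have hμle : |μ| ≤ 1 / 2 := hsize _ _ (by simp [Fin.mk_lt_mk])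
  have hμ2 : μ ^ 2 ≤ 1 / 4 := by
    have := abs_nonneg μ
    nlinarith [sq_abs μ]
  have hy2 : 0 ≤ ‖y‖ ^ 2 := by positivity
  rw [hexp] at h
  nlinarith

lemma geom_lemma {E : Type*} [NormedAddCommGroup E] [InnerProductSpace ℝ E]
    {r : ℕ} (b : Fin r → E) (hLLL : IsLLLReduced (3 / 4) b)
    (p : ℕ) (d : ℕ) (h : p + d < r) :
    ‖gso b ⟨p, by omega⟩‖ ^ 2 ≤ 2 ^ d * ‖gso b ⟨p + d, h⟩‖ ^ 2 := by
  induction d with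
  | zero => simp
  | succ n ih =>
    have h1 : p + n + 1 < r := by omega
    calc ‖gso b ⟨p, by omega⟩‖ ^ 2 ≤ 2 ^ n * ‖gso b ⟨p + n, by omega⟩‖ ^ 2 :=
          ih (by omega)
      _ ≤ 2 ^ n * (2 * ‖gso b ⟨p + n + 1, h1⟩‖ ^ 2) := by
          have := step_lemma b hLLL (p + n) h1
          have h2 : (0:ℝ) ≤ 2 ^ n := by positivity
          nlinarith
      _ = 2 ^ (n + 1) * ‖gso b ⟨p + (n + 1), by omega⟩‖ ^ 2 := by ring_nf

lemma nat_sum_lemma (n : ℕ) :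
    ∑ d ∈ Finset.range n, (d / 2 + 1) = (n + 1) ^ 2 / 4 := by
  induction n with
  | zero => simp
  | succ m ih =>
    rw [Finset.sum_range_succ, ih]
    rcases Nat.even_or_odd m with ⟨t, ht⟩ | ⟨t, ht⟩ <;> subst ht
    · obtain ⟨q, h1, h2⟩ : ∃ q, (t + t + 1) ^ 2 = 4 * q + 4 * t + 1 ∧
          (t + t + 1 + 1) ^ 2 = 4 * q + 8 * t + 4 := ⟨t * t, by ring, by ring⟩
      omega
    · obtain ⟨q, h1, h2⟩ : ∃ q, (2 * t + 1 + 1) ^ 2 = 4 * q + 8 * t + 4 ∧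
          (2 * t + 1 + 1 + 1) ^ 2 = 4 * q + 12 * t + 9 := ⟨t * t, by ring, by ring⟩
      omega

lemma floor_nat_div (m n : ℕ) : ⌊(m : ℝ) / (n : ℝ)⌋ = (m : ℤ) / (n : ℤ) := by
  rw [show ((m:ℝ) / (n:ℝ)) = (((m / n : ℚ)) : ℝ) by push_cast; ring,
    Rat.floor_cast, Rat.floor_natCast_div_natCast]

lemma term_bound {E : Type*} [NormedAddCommGroup E] [InnerProductSpace ℝ E]
    {r : ℕ} (b : Fin r → E) (hb : LinearIndependent ℝ b)
    (hLLL : IsLLLReduced (3 / 4) b) (j i : Fin r) (hji : j ≤ i) :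
    ⌊Real.logb 2 (‖gso b j‖ / ‖gso b i‖)⌋ ≤ (((i : ℕ) - (j : ℕ)) / 2 : ℕ) := by
  have key : ∀ n : Fin r, gso b n ≠ 0 := fun n =>
    @InnerProductSpace.gramSchmidt_ne_zero ℝ E _ _ _ (Fin r) _ _
      (inferInstance : WellFoundedLT (Fin r)) b n hb
  have hjne : gso b j ≠ 0 := key j
  have hine : gso b i ≠ 0 := key i
  have hjpos : 0 < ‖gso b j‖ := norm_pos_iff.mpr hjne
  have hipos : 0 < ‖gso b i‖ := norm_pos_iff.mpr hine
  set d : ℕ := (i : ℕ) - (j : ℕ) with hd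
  have hgeo : ‖gso b j‖ ^ 2 ≤ 2 ^ d * ‖gso b i‖ ^ 2 := by
    have hir : (j : ℕ) + d < r := by
      have := i.isLt
      omega
    have := geom_lemma b hLLL (j : ℕ) d hir
    have hji' : (⟨(j : ℕ) + d, hir⟩ : Fin r) = i := by
      apply Fin.ext
      simp only [hd]
      omega
    rwa [hji', show (⟨(j : ℕ), by omega⟩ : Fin r) = j from Fin.ext rfl] at this
  set x : ℝ := ‖gso b j‖ / ‖gso b i‖ with hx
  have hxpos : 0 < x := by positivity
  have hx2 : x ^ 2 ≤ 2 ^ d := by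
    rw [hx, div_pow, div_le_iff₀ (by positivity)]
    linarith [hgeo]
  have hlog : Real.logb 2 x ≤ (d : ℝ) / 2 := by
    have h1 : Real.logb 2 (x ^ 2) ≤ Real.logb 2 ((2 : ℝ) ^ d) :=
      Real.logb_le_logb_of_le one_lt_two (by positivity) hx2
    rw [Real.logb_pow, Real.logb_pow,
      Real.logb_self_eq_one (by norm_num : (1:ℝ) < 2)] at h1
    push_cast at h1 ⊢
    linarith
  calc ⌊Real.logb 2 x⌋ ≤ ⌊(d : ℝ) / 2⌋ := Int.floor_le_floor hlog
    _ = ((d / 2 : ℕ) : ℤ) := by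
        rw [show ((d : ℝ) / 2) = ((d : ℝ) / ((2 : ℕ) : ℝ)) by norm_num, floor_nat_div]
        omega

/-- If `b` is `(3/4)`-LLL reduced (so that in particular
`‖b*_i‖² ≥ (1/2)‖b*_{i-1}‖²`), `j ≤ k`, `β = k - j + 1`, and `R_i = ‖b*_j‖ / ‖b*_i‖`,
then the total qubit count satisfies
`∑_{i=j}^{k} (⌊log₂ R_i⌋ + 1) ≤ ⌊(β² + 3β)/4⌋`. -/
theorem qubit_count_le_of_isLLLReduced_three_quarters
    {E : Type*} [NormedAddCommGroup E] [InnerProductSpace ℝ E]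
    {r : ℕ} (b : Fin r → E) (hb : LinearIndependent ℝ b)
    (hLLL : IsLLLReduced (3 / 4) b)
    (j k : Fin r) (hjk : j ≤ k) (β : ℕ) (hβ : β = (k : ℕ) - (j : ℕ) + 1) :
    ∑ i ∈ Finset.Icc j k, (⌊Real.logb 2 (‖gso b j‖ / ‖gso b i‖)⌋ + 1) ≤
      ⌊((β : ℝ) ^ 2 + 3 * (β : ℝ)) / 4⌋ := by
  set f : ℕ → ℤ := fun n => (((n - (j : ℕ)) / 2 + 1 : ℕ) : ℤ) with hf
  have step1 : ∑ i ∈ Finset.Icc j k, (⌊Real.logb 2 (‖gso b j‖ / ‖gso b i‖)⌋ + 1) ≤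
      ∑ i ∈ Finset.Icc j k, f (i : ℕ) := by
    apply Finset.sum_le_sum
    intro i hi
    have hji : j ≤ i := (Finset.mem_Icc.mp hi).1
    have := term_bound b hb hLLL j i hji
    simp only [hf, Nat.cast_add, Nat.cast_one]
    linarith
  have step2 : ∑ i ∈ Finset.Icc j k, f (i : ℕ) =
      ∑ n ∈ Finset.Icc (j : ℕ) (k : ℕ), f n := by
    rw [← Fin.map_valEmbedding_Icc, Finset.sum_map]
    rfl
  have step3 : ∑ n ∈ Finset.Icc (j : ℕ) (k : ℕ), f n =
      ∑ d ∈ Finset.range β, ((d / 2 + 1 : ℕ) : ℤ) := by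
    rw [← Finset.Ico_add_one_right_eq_Icc, Finset.sum_Ico_eq_sum_range]
    have hcard : (k : ℕ) + 1 - (j : ℕ) = β := by
      have : (j : ℕ) ≤ (k : ℕ) := hjk
      omega
    rw [hcard]
    apply Finset.sum_congr rfl
    intro d _
    simp only [hf]
    congr 1
    omega
  have step4 : ∑ d ∈ Finset.range β, ((d / 2 + 1 : ℕ) : ℤ) =
      (((β + 1) ^ 2 / 4 : ℕ) : ℤ) := by
    rw [← Nat.cast_sum]
    exact Nat.cast_inj.mpr (nat_sum_lemma β)
  have step5 : ⌊((β : ℝ) ^ 2 + 3 * (β : ℝ)) / 4⌋ = (((β ^ 2 + 3 * β) / 4 : ℕ) : ℤ) := by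
    rw [show ((β : ℝ) ^ 2 + 3 * (β : ℝ)) / 4
        = (((β ^ 2 + 3 * β : ℕ) : ℝ)) / ((4 : ℕ) : ℝ) by push_cast; ring,
      floor_nat_div]
    omega
  have hβ1 : 1 ≤ β := by omega
  have step6 : ((β + 1) ^ 2 / 4 : ℕ) ≤ ((β ^ 2 + 3 * β) / 4 : ℕ) := by
    apply Nat.div_le_div_right
    obtain ⟨q, h1, h2⟩ : ∃ q, (β + 1) ^ 2 = q + 2 * β + 1 ∧ β ^ 2 + 3 * β = q + 3 * β :=
      ⟨β ^ 2, by ring, by ring⟩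
    omega
  rw [step5]
  calc ∑ i ∈ Finset.Icc j k, (⌊Real.logb 2 (‖gso b j‖ / ‖gso b i‖)⌋ + 1)
      ≤ ∑ i ∈ Finset.Icc j k, f (i : ℕ) := step1
    _ = (((β + 1) ^ 2 / 4 : ℕ) : ℤ) := by rw [step2, step3, step4]
    _ ≤ (((β ^ 2 + 3 * β) / 4 : ℕ) : ℤ) := by exact_mod_cast step6
end

section
/- Let E be a real inner product space, b₁,…,b_r ∈ E linearly independent, and 1/4 < δ < 1. If the basis is δ-LLL reduced, then for every nonzero lattice vector v = Σ_{i=1}^r x_i b_i with x_i ∈ ℤ (not all zero), the first basis vector satisfies ‖b₁‖² ≤ (δ − 1/4)^{−(r−1)} ‖v‖². In particular, for δ = 3/4 this gives ‖b₁‖² ≤ 2^{r−1} λ₁², where λ₁ is the norm of a shortest nonzero lattice vector. -/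
open scoped InnerProductSpace

instance wfltFin {r : ℕ} : WellFoundedLT (Fin r) := inferInstance

section Aux

variable {E : Type*} [NormedAddCommGroup E] [InnerProductSpace ℝ E] {r : ℕ}

lemma gso_def (b : Fin r → E) : gso b = InnerProductSpace.gramSchmidt ℝ b := rfl

lemma gso_orth (b : Fin r → E) {i j : Fin r} (h : i ≠ j) :
    ⟪gso b i, gso b j⟫_ℝ = 0 := InnerProductSpace.gramSchmidt_orthogonal ℝ b h

lemma inner_gso_of_lt (b : Fin r → E) {i j : Fin r} (h : i < j) :
    ⟪b i, gso b j⟫_ℝ = 0 := by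
  rw [real_inner_comm, gso_def]
  exact InnerProductSpace.gramSchmidt_inv_triangular ℝ b h

lemma inner_self_gso (b : Fin r → E) (i : Fin r) :
    ⟪b i, gso b i⟫_ℝ = ‖gso b i‖ ^ 2 := by
  rw [gso_def]
  nth_rewrite 1 [InnerProductSpace.gramSchmidt_def'' ℝ b i]
  rw [inner_add_left, sum_inner, real_inner_self_eq_norm_sq, add_eq_left]
  apply Finset.sum_eq_zero
  intro k hk
  rw [real_inner_smul_left, InnerProductSpace.gramSchmidt_orthogonal ℝ b (Finset.mem_Iio.mp hk).ne, mul_zero]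

end Aux

/-- If `b` is `δ`-LLL reduced with `1/4 < δ < 1`, then for every
nonzero lattice vector `v = ∑ x_i b_i` (`x_i ∈ ℤ`, not all zero) the first basis vector
satisfies `‖b_1‖² ≤ (δ - 1/4)^{-(r-1)} ‖v‖²`; in particular, for `δ = 3/4` this gives
`‖b_1‖² ≤ 2^{r-1} ‖v‖²` (hence `‖b_1‖² ≤ 2^{r-1} λ₁²`). -/
theorem sq_norm_first_le_of_isLLLReduced
    {E : Type*} [NormedAddCommGroup E] [InnerProductSpace ℝ E]
    {r : ℕ} (hr : 0 < r) (b : Fin r → E) (hb : LinearIndependent ℝ b)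
    (δ : ℝ) (hδ : 1 / 4 < δ) (hδ' : δ < 1) (hLLL : IsLLLReduced δ b)
    (x : Fin r → ℤ) (hx : x ≠ 0) :
    ‖b ⟨0, hr⟩‖ ^ 2 ≤ ((δ - 1 / 4) ^ (r - 1))⁻¹ * ‖∑ i, (x i : ℝ) • b i‖ ^ 2 ∧
    (δ = 3 / 4 → ‖b ⟨0, hr⟩‖ ^ 2 ≤ 2 ^ (r - 1) * ‖∑ i, (x i : ℝ) • b i‖ ^ 2) := by
  obtain ⟨hsize, hlov⟩ := hLLL
  set a : ℝ := δ - 1 / 4 with ha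
  have ha0 : 0 < a := by simp [ha]; linarith
  have ha1 : a ≤ 1 := by simp [ha]; linarith
  clear_value a
  set v : E := ∑ i, (x i : ℝ) • b i with hv
  -- b at index 0 equals its Gram-Schmidt vector
  have h0 : b ⟨0, hr⟩ = gso b ⟨0, hr⟩ := by
    rw [gso_def, InnerProductSpace.gramSchmidt_def]
    have : Finset.Iio (⟨0, hr⟩ : Fin r) = ∅ := by
      apply Finset.eq_empty_of_forall_notMem
      intro i hi
      simp only [Finset.mem_Iio, Fin.lt_def] at hi
      omega
    rw [this, Finset.sum_empty, sub_zero]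
  -- Lovász step consequence
  have step : ∀ (t : ℕ) (ht : t + 1 < r),
      a * ‖gso b ⟨t, Nat.lt_of_succ_lt ht⟩‖ ^ 2 ≤ ‖gso b ⟨t + 1, ht⟩‖ ^ 2 := by
    intro t ht
    have hL := hlov t ht
    set c : ℝ := gsCoeff b ⟨t + 1, ht⟩ ⟨t, Nat.lt_of_succ_lt ht⟩ with hc
    have hcb : |c| ≤ 1 / 2 := hsize _ _ (by simp [Fin.lt_def])
    clear_value c
    have horth : ⟪gso b ⟨t + 1, ht⟩, gso b ⟨t, Nat.lt_of_succ_lt ht⟩⟫_ℝ = 0 :=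
      gso_orth b (by simp [Fin.ext_iff])
    rw [norm_add_sq_real, inner_smul_right, horth, norm_smul] at hL
    have h2 : (|c| * ‖gso b ⟨t, Nat.lt_of_succ_lt ht⟩‖) ^ 2
        ≤ (1 / 4) * ‖gso b ⟨t, Nat.lt_of_succ_lt ht⟩‖ ^ 2 := by
      rw [mul_pow]
      have : |c| ^ 2 ≤ (1 / 2) ^ 2 := by
        apply pow_le_pow_left₀ (abs_nonneg c) hcb
      nlinarith [sq_nonneg ‖gso b ⟨t, Nat.lt_of_succ_lt ht⟩‖]
    simp only [Real.norm_eq_abs] at hL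
    have key : a * ‖gso b ⟨t, Nat.lt_of_succ_lt ht⟩‖ ^ 2
        = δ * ‖gso b ⟨t, Nat.lt_of_succ_lt ht⟩‖ ^ 2
          - (1 / 4) * ‖gso b ⟨t, Nat.lt_of_succ_lt ht⟩‖ ^ 2 := by rw [ha]; ring
    have hL' : δ * ‖gso b ⟨t, Nat.lt_of_succ_lt ht⟩‖ ^ 2 ≤ ‖gso b ⟨t + 1, ht⟩‖ ^ 2
        + (|c| * ‖gso b ⟨t, Nat.lt_of_succ_lt ht⟩‖) ^ 2 := by linarith [hL]
    linarith [hL', h2, key]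
  -- chain: a^n * ‖gso 0‖² ≤ ‖gso n‖²
  have chain : ∀ (n : ℕ) (hn : n < r),
      a ^ n * ‖gso b ⟨0, hr⟩‖ ^ 2 ≤ ‖gso b ⟨n, hn⟩‖ ^ 2 := by
    intro n
    induction n with
    | zero => intro hn; simp
    | succ m ih =>
      intro hn
      have hm : m < r := Nat.lt_of_succ_lt hn
      calc a ^ (m + 1) * ‖gso b ⟨0, hr⟩‖ ^ 2
          = a * (a ^ m * ‖gso b ⟨0, hr⟩‖ ^ 2) := by ring
        _ ≤ a * ‖gso b ⟨m, hm⟩‖ ^ 2 := by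
            apply mul_le_mul_of_nonneg_left (ih hm) ha0.le
        _ ≤ ‖gso b ⟨m + 1, hn⟩‖ ^ 2 := step m hn
  -- the largest index with nonzero coefficient
  have hsne : (Finset.univ.filter fun i => x i ≠ 0).Nonempty := by
    rcases Function.ne_iff.mp hx with ⟨i, hi⟩
    refine ⟨i, ?_⟩
    simp only [Finset.mem_filter, Finset.mem_univ, true_and]
    exact hi
  set k : Fin r := (Finset.univ.filter fun i => x i ≠ 0).max' hsne with hk
  have hxk : x k ≠ 0 := by
    have := (Finset.univ.filter fun i => x i ≠ 0).max'_mem hsne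
    simpa using this
  have hmax : ∀ i : Fin r, k < i → x i = 0 := by
    intro i hi
    by_contra h
    exact absurd (Finset.le_max' _ i (by simp [h])) (not_le.mpr hi)
  have hgk : gso b k ≠ 0 := by
    rw [gso_def]; exact InnerProductSpace.gramSchmidt_ne_zero k hb
  have hgkpos : 0 < ‖gso b k‖ := norm_pos_iff.mpr hgk
  -- inner product of v with gso k
  have hinner : ⟪v, gso b k⟫_ℝ = (x k : ℝ) * ‖gso b k‖ ^ 2 := by
    rw [hv, sum_inner]
    rw [Finset.sum_eq_single k]
    · rw [inner_smul_left, inner_self_gso]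
      simp
    · intro i _ hik
      rw [inner_smul_left]
      rcases lt_or_gt_of_ne hik with h | h
      · rw [inner_gso_of_lt b h, mul_zero]
      · rw [hmax i h]; simp
    · simp
  -- ‖gso k‖ ≤ ‖v‖
  have hkv : ‖gso b k‖ ^ 2 ≤ ‖v‖ ^ 2 := by
    have h1 : (1 : ℝ) ≤ |(x k : ℝ)| := by
      rw [← Int.cast_abs]
      exact_mod_cast Int.one_le_abs hxk
    have h2 : |(x k : ℝ)| * ‖gso b k‖ ^ 2 = |⟪v, gso b k⟫_ℝ| := by
      rw [hinner, abs_mul, abs_of_nonneg (sq_nonneg ‖gso b k‖)]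
    have h3 : |⟪v, gso b k⟫_ℝ| ≤ ‖v‖ * ‖gso b k‖ := abs_real_inner_le_norm v _
    have h4 : ‖gso b k‖ ^ 2 ≤ ‖v‖ * ‖gso b k‖ := by
      calc ‖gso b k‖ ^ 2 ≤ |(x k : ℝ)| * ‖gso b k‖ ^ 2 := by nlinarith [sq_nonneg ‖gso b k‖]
        _ ≤ ‖v‖ * ‖gso b k‖ := h2 ▸ h3
    have h5 : ‖gso b k‖ ≤ ‖v‖ := by
      rw [pow_two] at h4
      exact le_of_mul_le_mul_right (by linarith [h4]) hgkpos
    exact pow_le_pow_left₀ (norm_nonneg _) h5 2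
  -- main estimate
  have main : ‖b ⟨0, hr⟩‖ ^ 2 ≤ (a ^ (r - 1))⁻¹ * ‖v‖ ^ 2 := by
    have hc := chain k.val k.isLt
    have hk' : (⟨k.val, k.isLt⟩ : Fin r) = k := rfl
    rw [hk'] at hc
    have hpow : a ^ (r - 1) ≤ a ^ k.val := by
      apply pow_le_pow_of_le_one ha0.le ha1
      omega
    have hpowpos : (0 : ℝ) < a ^ k.val := pow_pos ha0 _
    have hpowpos' : (0 : ℝ) < a ^ (r - 1) := pow_pos ha0 _
    have h1 : ‖b ⟨0, hr⟩‖ ^ 2 ≤ (a ^ k.val)⁻¹ * ‖v‖ ^ 2 := by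
      rw [h0, inv_mul_eq_div, le_div_iff₀ hpowpos]
      nlinarith [hc, hkv, hpowpos]
    calc ‖b ⟨0, hr⟩‖ ^ 2 ≤ (a ^ k.val)⁻¹ * ‖v‖ ^ 2 := h1
      _ ≤ (a ^ (r - 1))⁻¹ * ‖v‖ ^ 2 := by
          apply mul_le_mul_of_nonneg_right _ (sq_nonneg _)
          exact inv_anti₀ hpowpos' hpow
  refine ⟨main, fun hδ34 => ?_⟩
  have : a = 1 / 2 := by rw [ha, hδ34]; norm_num
  rw [this] at main
  have : ((1 / 2 : ℝ) ^ (r - 1))⁻¹ = 2 ^ (r - 1) := by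
    rw [← inv_pow]; norm_num
  rwa [this] at main
end
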